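/- Let n ≥ 1, let E, F ⊂ ℝⁿ be non-empty compact sets and let λ > 0, τ > 0. Then for all x ∈ ℝⁿ, |SR_{λ,τ}(χ_E)(x) − SR_{λ,τ}(χ_F)(x)| ≤ 4√λ · dist_H(E, F), i.e. the stable ridge transform is Hausdorff-Lipschitz continuous with constant 4√λ. -/

import Mathlib

open Metric RealInnerProductSpace

/-- Convex envelope: pointwise sup of affine minorants. -/
noncomputable def convEnv {n : ℕ} (g : EuclideanSpace ℝ (Fin n) → ℝ)
    (x : EuclideanSpace ℝ (Fin n)) : ℝ :=
  sSup {a : ℝ | ∃ ℓ : EuclideanSpace ℝ (Fin n) →ᵃ[ℝ] ℝ, (∀ y, ℓ y ≤ g y) ∧ a = ℓ x}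

/-- Lower compensated convex transform. -/
noncomputable def lowerT {n : ℕ} (lam : ℝ) (f : EuclideanSpace ℝ (Fin n) → ℝ)
    (x : EuclideanSpace ℝ (Fin n)) : ℝ :=
  convEnv (fun y => f y + lam * ‖y‖ ^ 2) x - lam * ‖x‖ ^ 2

/-- Upper compensated convex transform. -/
noncomputable def upperT {n : ℕ} (lam : ℝ) (f : EuclideanSpace ℝ (Fin n) → ℝ)
    (x : EuclideanSpace ℝ (Fin n)) : ℝ :=
  lam * ‖x‖ ^ 2 - convEnv (fun y => lam * ‖y‖ ^ 2 - f y) x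

/-- Characteristic function of a set: `χ_K(x) = 1` if `x ∈ K`, `0` otherwise. -/
noncomputable def chi {n : ℕ} (K : Set (EuclideanSpace ℝ (Fin n)))
    (x : EuclideanSpace ℝ (Fin n)) : ℝ :=
  K.indicator (fun _ => (1 : ℝ)) x

/-- Stable ridge transform `SR_{λ,τ}(χ_E) = C^u_λ(χ_E) − C^l_τ(C^u_λ(χ_E))`. -/
noncomputable def stableRidge {n : ℕ} (lam tau : ℝ) (E : Set (EuclideanSpace ℝ (Fin n)))
    (x : EuclideanSpace ℝ (Fin n)) : ℝ :=
  upperT lam (chi E) x - lowerT tau (fun y => upperT lam (chi E) y) x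

section Aux

variable {n : ℕ}

private lemma chi_nonneg (K : Set (EuclideanSpace ℝ (Fin n))) (y : EuclideanSpace ℝ (Fin n)) :
    0 ≤ chi K y :=
  Set.indicator_nonneg (fun _ _ => zero_le_one) y

private lemma chi_le_one (K : Set (EuclideanSpace ℝ (Fin n))) (y : EuclideanSpace ℝ (Fin n)) :
    chi K y ≤ 1 := by
  unfold chi; by_cases h : y ∈ K <;> simp [h]

private lemma chi_of_mem {K : Set (EuclideanSpace ℝ (Fin n))} {y : EuclideanSpace ℝ (Fin n)}
    (h : y ∈ K) : chi K y = 1 := by simp [chi, h]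

private lemma chi_of_not_mem {K : Set (EuclideanSpace ℝ (Fin n))} {y : EuclideanSpace ℝ (Fin n)}
    (h : y ∉ K) : chi K y = 0 := by simp [chi, h]

private lemma minorSet_bddAbove (g : EuclideanSpace ℝ (Fin n) → ℝ) (x : EuclideanSpace ℝ (Fin n)) :
    BddAbove {a : ℝ | ∃ ℓ : EuclideanSpace ℝ (Fin n) →ᵃ[ℝ] ℝ, (∀ y, ℓ y ≤ g y) ∧ a = ℓ x} :=
  ⟨g x, by rintro a ⟨ℓ, hℓ, rfl⟩; exact hℓ x⟩

private lemma le_convEnv (g : EuclideanSpace ℝ (Fin n) → ℝ) (x : EuclideanSpace ℝ (Fin n))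
    (ℓ : EuclideanSpace ℝ (Fin n) →ᵃ[ℝ] ℝ) (hℓ : ∀ y, ℓ y ≤ g y) : ℓ x ≤ convEnv g x :=
  le_csSup (minorSet_bddAbove g x) ⟨ℓ, hℓ, rfl⟩

private lemma convEnv_le (g : EuclideanSpace ℝ (Fin n) → ℝ) (x : EuclideanSpace ℝ (Fin n))
    (ℓ0 : EuclideanSpace ℝ (Fin n) →ᵃ[ℝ] ℝ) (h0 : ∀ y, ℓ0 y ≤ g y) : convEnv g x ≤ g x := by
  unfold convEnv
  refine csSup_le ⟨ℓ0 x, ℓ0, h0, rfl⟩ ?_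
  rintro a ⟨ℓ, hℓ, rfl⟩; exact hℓ x

private lemma convEnv_le_shift (g1 g2 : EuclideanSpace ℝ (Fin n) → ℝ) (c : ℝ)
    (ℓ0 : EuclideanSpace ℝ (Fin n) →ᵃ[ℝ] ℝ) (h0 : ∀ y, ℓ0 y ≤ g1 y)
    (h : ∀ ℓ : EuclideanSpace ℝ (Fin n) →ᵃ[ℝ] ℝ, (∀ y, ℓ y ≤ g1 y) → ∀ y, ℓ y - c ≤ g2 y)
    (x : EuclideanSpace ℝ (Fin n)) : convEnv g1 x ≤ convEnv g2 x + c := by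
  unfold convEnv
  refine csSup_le ⟨ℓ0 x, ℓ0, h0, rfl⟩ ?_
  rintro a ⟨ℓ, hℓ, rfl⟩
  have key : ∀ y, (ℓ - AffineMap.const ℝ (EuclideanSpace ℝ (Fin n)) c) y ≤ g2 y := by
    intro y
    have := h ℓ hℓ y
    simpa [AffineMap.coe_sub, AffineMap.coe_const, Pi.sub_apply] using this
  have h2 := le_convEnv g2 x _ key
  simp only [AffineMap.coe_sub, AffineMap.coe_const, Pi.sub_apply, Function.const_apply] at h2
  unfold convEnv at h2
  linarith

private lemma quad_key {Q A B : ℝ} (hQ : 1 ≤ Q) (hB : 0 ≤ B)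
    (h : ∀ t : ℝ, 0 ≤ Q + A * t + B * t ^ 2) : 1 - 2 * Real.sqrt B ≤ Q + A + B := by
  rcases eq_or_lt_of_le hB with hB0 | hBpos
  · have hA : A = 0 := by
      by_contra hA
      have ht := h (-(Q + 1) / A)
      rw [← hB0] at ht
      have : A * (-(Q + 1) / A) = -(Q + 1) := by field_simp
      rw [this] at ht
      linarith
    rw [← hB0, Real.sqrt_zero, hA]
    linarith
  · set s := Real.sqrt Q with hs
    set u := Real.sqrt B with hu
    have hs1 : 1 ≤ s := by
      rw [hs, show (1:ℝ) = Real.sqrt 1 by simp]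
      exact Real.sqrt_le_sqrt (by linarith)
    have hspos : 0 < s := by linarith
    have hupos : 0 < u := Real.sqrt_pos.mpr hBpos
    have hQs : s ^ 2 = Q := Real.sq_sqrt (by linarith)
    have hBu : u ^ 2 = B := Real.sq_sqrt hB
    have h1 := h (s / u)
    have e1 : Q + A * (s / u) + B * (s / u) ^ 2 = (Q * u ^ 2 + A * (s * u) + B * s ^ 2) / u ^ 2 := by
      field_simp
    rw [e1] at h1
    have h2 : 0 ≤ Q * u ^ 2 + A * (s * u) + B * s ^ 2 := by
      have h3 := mul_nonneg h1 (sq_nonneg u)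
      rwa [div_mul_cancel₀ _ (pow_ne_zero 2 (ne_of_gt hupos))] at h3
    have hA : -(2 * s * u) ≤ A := by
      rw [← hQs, ← hBu] at h2
      nlinarith [mul_pos hspos hupos]
    rw [← hQs, ← hBu]
    nlinarith [sq_nonneg (s - 1 - u)]

private lemma expand_quad (lam : ℝ) (ℓ : EuclideanSpace ℝ (Fin n) →ᵃ[ℝ] ℝ)
    (z v : EuclideanSpace ℝ (Fin n)) (t : ℝ) :
    lam * ‖z + t • v‖ ^ 2 - ℓ (z + t • v) =
      (lam * ‖z‖ ^ 2 - ℓ z) + (2 * lam * ⟪z, v⟫ - ℓ.linear v) * t + (lam * ‖v‖ ^ 2) * t ^ 2 := by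
  have h1 : ℓ (z + t • v) = ℓ.linear (t • v) + ℓ z := by
    have := ℓ.map_vadd z (t • v)
    simpa [vadd_eq_add, add_comm] using this
  have h2 : ℓ.linear (t • v) = t * ℓ.linear v := by
    rw [map_smul]; simp
  have h3 : ‖z + t • v‖ ^ 2 = ‖z‖ ^ 2 + 2 * (t * ⟪z, v⟫) + t ^ 2 * ‖v‖ ^ 2 := by
    rw [norm_add_sq_real, real_inner_smul_right, norm_smul]
    simp [mul_pow, sq_abs]
  rw [h1, h2, h3]
  ring

private lemma transfer {F F' : Set (EuclideanSpace ℝ (Fin n))} (hFc : IsCompact F)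
    (hF : F.Nonempty) {lam η : ℝ} (hlam : 0 < lam) (hη : 0 ≤ η)
    (hsub : ∀ y ∈ F', Metric.infDist y F ≤ η)
    (ℓ : EuclideanSpace ℝ (Fin n) →ᵃ[ℝ] ℝ)
    (hℓ : ∀ y, ℓ y ≤ lam * ‖y‖ ^ 2 - chi F y) (y : EuclideanSpace ℝ (Fin n)) :
    ℓ y - 2 * Real.sqrt lam * η ≤ lam * ‖y‖ ^ 2 - chi F' y := by
  have hc : 0 ≤ 2 * Real.sqrt lam * η := by positivity
  by_cases hy : y ∈ F'
  · obtain ⟨z, hzF, hzd⟩ := hFc.exists_infDist_eq_dist hF y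
    have hdzη : dist y z ≤ η := by rw [← hzd]; exact hsub y hy
    set v : EuclideanSpace ℝ (Fin n) := y - z with hv
    have hyz : y = z + v := by rw [hv]; abel
    set Q := lam * ‖z‖ ^ 2 - ℓ z with hQdef
    set A := 2 * lam * ⟪z, v⟫ - ℓ.linear v with hAdef
    set B := lam * ‖v‖ ^ 2 with hBdef
    have hQ : 1 ≤ Q := by
      have h1 := hℓ z
      rw [chi_of_mem hzF] at h1
      rw [hQdef]; linarith
    have hB : 0 ≤ B := by rw [hBdef]; positivity
    have hpos : ∀ t : ℝ, 0 ≤ Q + A * t + B * t ^ 2 := by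
      intro t
      rw [← expand_quad lam ℓ z v t]
      have h1 := hℓ (z + t • v)
      have h2 := chi_nonneg F (z + t • v)
      linarith
    have key := quad_key hQ hB hpos
    have hy1 : lam * ‖y‖ ^ 2 - ℓ y = Q + A + B := by
      have h1 := expand_quad lam ℓ z v 1
      rw [one_smul] at h1
      rw [hyz]
      rw [h1]; ring
    have hsB : Real.sqrt B ≤ Real.sqrt lam * η := by
      rw [hBdef, Real.sqrt_mul hlam.le, Real.sqrt_sq (norm_nonneg v)]
      have hvη : ‖v‖ ≤ η := by
        rw [hv, ← dist_eq_norm]; exact hdzη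
      exact mul_le_mul_of_nonneg_left hvη (Real.sqrt_nonneg lam)
    rw [chi_of_mem hy]
    linarith
  · rw [chi_of_not_mem hy]
    have h1 := hℓ y
    have h2 := chi_nonneg F y
    linarith

private lemma upperT_hdist {E F : Set (EuclideanSpace ℝ (Fin n))} (hE : E.Nonempty)
    (hF : F.Nonempty) (hEc : IsCompact E) (hFc : IsCompact F) {lam : ℝ} (hlam : 0 < lam)
    (x : EuclideanSpace ℝ (Fin n)) :
    |upperT lam (chi E) x - upperT lam (chi F) x| ≤
      2 * Real.sqrt lam * Metric.hausdorffDist E F := by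
  set η := Metric.hausdorffDist E F with hηdef
  have hηnn : 0 ≤ η := Metric.hausdorffDist_nonneg
  have hfin : EMetric.hausdorffEdist E F ≠ ⊤ :=
    Metric.hausdorffEdist_ne_top_of_nonempty_of_bounded hE hF hEc.isBounded hFc.isBounded
  have hminE : ∀ y, (AffineMap.const ℝ (EuclideanSpace ℝ (Fin n)) (-1 : ℝ)) y ≤
      lam * ‖y‖ ^ 2 - chi E y := by
    intro y
    have h1 := chi_le_one E y
    have h2 : (0:ℝ) ≤ lam * ‖y‖ ^ 2 := by positivity
    simp only [AffineMap.const_apply]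
    linarith
  have hminF : ∀ y, (AffineMap.const ℝ (EuclideanSpace ℝ (Fin n)) (-1 : ℝ)) y ≤
      lam * ‖y‖ ^ 2 - chi F y := by
    intro y
    have h1 := chi_le_one F y
    have h2 : (0:ℝ) ≤ lam * ‖y‖ ^ 2 := by positivity
    simp only [AffineMap.const_apply]
    linarith
  have hsubEF : ∀ y ∈ E, Metric.infDist y F ≤ η := fun y hy =>
    Metric.infDist_le_hausdorffDist_of_mem hy hfin
  have hsubFE : ∀ y ∈ F, Metric.infDist y E ≤ η := by
    intro y hy
    have h1 := Metric.infDist_le_hausdorffDist_of_mem hy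
      (by rwa [Metric.hausdorffEDist_comm] : Metric.hausdorffEDist F E ≠ ⊤)
    rwa [Metric.hausdorffDist_comm] at h1
  have h1 : convEnv (fun y => lam * ‖y‖ ^ 2 - chi F y) x ≤
      convEnv (fun y => lam * ‖y‖ ^ 2 - chi E y) x + 2 * Real.sqrt lam * η :=
    convEnv_le_shift _ _ _ _ hminF
      (fun ℓ hℓ => transfer hFc hF hlam hηnn hsubEF ℓ hℓ) x
  have h2 : convEnv (fun y => lam * ‖y‖ ^ 2 - chi E y) x ≤
      convEnv (fun y => lam * ‖y‖ ^ 2 - chi F y) x + 2 * Real.sqrt lam * η :=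
    convEnv_le_shift _ _ _ _ hminE
      (fun ℓ hℓ => transfer hEc hE hlam hηnn hsubFE ℓ hℓ) x
  unfold upperT
  rw [abs_le]
  constructor <;> linarith

private lemma upperT_nonneg {lam : ℝ} (hlam : 0 < lam) (E : Set (EuclideanSpace ℝ (Fin n)))
    (y : EuclideanSpace ℝ (Fin n)) : 0 ≤ upperT lam (chi E) y := by
  have hminE : ∀ w, (AffineMap.const ℝ (EuclideanSpace ℝ (Fin n)) (-1 : ℝ)) w ≤
      lam * ‖w‖ ^ 2 - chi E w := by
    intro w
    have h1 := chi_le_one E w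
    have h2 : (0:ℝ) ≤ lam * ‖w‖ ^ 2 := by positivity
    simp only [AffineMap.const_apply]
    linarith
  have h1 := convEnv_le (fun w => lam * ‖w‖ ^ 2 - chi E w) y _ hminE
  have h2 := chi_nonneg E y
  unfold upperT
  linarith

private lemma lowerT_close {f1 f2 : EuclideanSpace ℝ (Fin n) → ℝ}
    (h1 : ∀ y, 0 ≤ f1 y) (h2 : ∀ y, 0 ≤ f2 y) {tau δ : ℝ} (htau : 0 ≤ tau)
    (hd : ∀ y, |f1 y - f2 y| ≤ δ) (x : EuclideanSpace ℝ (Fin n)) :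
    |lowerT tau f1 x - lowerT tau f2 x| ≤ δ := by
  have hmin1 : ∀ y, (AffineMap.const ℝ (EuclideanSpace ℝ (Fin n)) (0 : ℝ)) y ≤
      f1 y + tau * ‖y‖ ^ 2 := by
    intro y
    have : 0 ≤ tau * ‖y‖ ^ 2 := by positivity
    simp only [AffineMap.const_apply]
    linarith [h1 y]
  have hmin2 : ∀ y, (AffineMap.const ℝ (EuclideanSpace ℝ (Fin n)) (0 : ℝ)) y ≤
      f2 y + tau * ‖y‖ ^ 2 := by
    intro y
    have : 0 ≤ tau * ‖y‖ ^ 2 := by positivity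
    simp only [AffineMap.const_apply]
    linarith [h2 y]
  have ha : convEnv (fun y => f1 y + tau * ‖y‖ ^ 2) x ≤
      convEnv (fun y => f2 y + tau * ‖y‖ ^ 2) x + δ := by
    refine convEnv_le_shift _ _ _ _ hmin1 (fun ℓ hℓ y => ?_) x
    have h3 := hℓ y
    have h4 := (abs_le.mp (hd y)).2
    linarith
  have hb : convEnv (fun y => f2 y + tau * ‖y‖ ^ 2) x ≤
      convEnv (fun y => f1 y + tau * ‖y‖ ^ 2) x + δ := by
    refine convEnv_le_shift _ _ _ _ hmin2 (fun ℓ hℓ y => ?_) x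
    have h3 := hℓ y
    have h4 := (abs_le.mp (hd y)).1
    linarith
  unfold lowerT
  rw [abs_le]
  constructor <;> linarith

end Aux

/-- Hausdorff-Lipschitz continuity of the stable ridge transform. -/
theorem stableRidge_hausdorff_lipschitz (n : ℕ) (hn : 1 ≤ n)
    (E F : Set (EuclideanSpace ℝ (Fin n))) (hE : E.Nonempty) (hF : F.Nonempty)
    (hEc : IsCompact E) (hFc : IsCompact F)
    (lam tau : ℝ) (hlam : 0 < lam) (htau : 0 < tau) (x : EuclideanSpace ℝ (Fin n)) :
    |stableRidge lam tau E x - stableRidge lam tau F x| ≤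
      4 * Real.sqrt lam * Metric.hausdorffDist E F := by
  set η := Metric.hausdorffDist E F with hηdef
  have hu : ∀ y, |upperT lam (chi E) y - upperT lam (chi F) y| ≤ 2 * Real.sqrt lam * η :=
    fun y => upperT_hdist hE hF hEc hFc hlam y
  have hl : |lowerT tau (fun y => upperT lam (chi E) y) x -
      lowerT tau (fun y => upperT lam (chi F) y) x| ≤ 2 * Real.sqrt lam * η :=
    lowerT_close (fun y => upperT_nonneg hlam E y) (fun y => upperT_nonneg hlam F y)
      htau.le hu x
  have hux := hu x
  unfold stableRidge
  rw [abs_le] at hux hl ⊢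
  constructor <;> linarith
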